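/- Let p, σ > 0. For ε > 0 and ζ, b > 0 define A(ε) = N((p/σ)√ζ − ε/(σ√ζ)) + e^{2pε/σ²}·N(−(p/σ)√ζ − ε/(σ√ζ)) and B(ε) = e^{−2pε/σ²}·N((p/σ)√b − ε/(σ√b)) + N(−(p/σ)√b − ε/(σ√b)), where N is the standard normal CDF. Then lim_{ε↓0} (B(ε)·(1 − A(ε)))/(1 − B(ε)·A(ε)) = (√b·Ψ((p/σ)√(ζ/2)) − (p/σ)√(bζπ/2)) / (√b·Ψ((p/σ)√(ζ/2)) + √ζ·Ψ((p/σ)√(b/2))), where Ψ(x) = 2√π·x·N(√2 x) − √π·x + e^{−x²}. -/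

import Mathlib

open Real Set Filter

/-- Standard normal cumulative distribution function. -/
noncomputable def stdNormalCDF (y : ℝ) : ℝ :=
  (1 / Real.sqrt (2 * Real.pi)) * ∫ t in Set.Iic y, Real.exp (-t ^ 2 / 2)

/-- The function Ψ from the Parisian ruin formula for Brownian motion with drift. -/
noncomputable def Psi (x : ℝ) : ℝ :=
  2 * Real.sqrt Real.pi * x * stdNormalCDF (Real.sqrt 2 * x)
    - Real.sqrt Real.pi * x + Real.exp (-x ^ 2)

open MeasureTheory

lemma gaussFun_eq : (fun t : ℝ => Real.exp (-t ^ 2 / 2)) = fun t : ℝ => Real.exp (-(1/2 : ℝ) * t ^ 2) := by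
  funext t; ring_nf

lemma gaussInt : Integrable (fun t : ℝ => Real.exp (-t ^ 2 / 2)) := by
  rw [gaussFun_eq]; exact integrable_exp_neg_mul_sq (by norm_num)

lemma gaussTotal : ∫ t : ℝ, Real.exp (-t ^ 2 / 2) = Real.sqrt (2 * Real.pi) := by
  rw [gaussFun_eq, integral_gaussian]
  rw [div_div_eq_mul_div, div_one, mul_comm]

lemma hasDerivAt_cdf (y : ℝ) :
    HasDerivAt stdNormalCDF (1 / Real.sqrt (2 * Real.pi) * Real.exp (-y ^ 2 / 2)) y := by
  have hrepr : stdNormalCDF = fun y : ℝ =>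
      (1 / Real.sqrt (2 * Real.pi)) *
        ((∫ t in Set.Iic (0:ℝ), Real.exp (-t ^ 2 / 2)) + ∫ t in (0:ℝ)..y, Real.exp (-t ^ 2 / 2)) := by
    funext y
    unfold stdNormalCDF
    congr 1
    rw [← intervalIntegral.integral_Iic_sub_Iic gaussInt.integrableOn gaussInt.integrableOn]
    ring
  rw [hrepr]
  have h1 : HasDerivAt (fun y : ℝ => ∫ t in (0:ℝ)..y, Real.exp (-t ^ 2 / 2))
      (Real.exp (-y ^ 2 / 2)) y := by
    have hc : Continuous (fun t : ℝ => Real.exp (-t ^ 2 / 2)) :=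
      Real.continuous_exp.comp ((continuous_pow 2).neg.div_const 2)
    exact intervalIntegral.integral_hasDerivAt_right
      ((gaussInt).intervalIntegrable)
      (hc.stronglyMeasurable.stronglyMeasurableAtFilter)
      hc.continuousAt
  simpa [mul_comm] using (h1.const_add _).const_mul (1 / Real.sqrt (2 * Real.pi))

lemma cdf_add_neg (y : ℝ) : stdNormalCDF y + stdNormalCDF (-y) = 1 := by
  unfold stdNormalCDF
  have hrev : (∫ t in Set.Iic (-y), Real.exp (-t ^ 2 / 2))
      = ∫ t in Set.Ioi y, Real.exp (-t ^ 2 / 2) := by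
    rw [← integral_comp_neg_Ioi]
    congr 1; funext t; ring_nf
  rw [hrev, ← mul_add, intervalIntegral.integral_Iic_add_Ioi gaussInt.integrableOn gaussInt.integrableOn,
    gaussTotal]
  have : Real.sqrt (2 * Real.pi) ≠ 0 := by positivity
  field_simp

lemma cdf_nonneg (y : ℝ) : 0 ≤ stdNormalCDF y := by
  unfold stdNormalCDF
  apply mul_nonneg (by positivity)
  exact setIntegral_nonneg measurableSet_Iic (fun t _ => (Real.exp_pos _).le)

lemma mills (a : ℝ) (ha : 0 < a) :
    a * stdNormalCDF (-a) ≤ 1 / Real.sqrt (2 * Real.pi) * Real.exp (-a ^ 2 / 2) := by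
  have hrev : (∫ t in Set.Iic (-a), Real.exp (-t ^ 2 / 2))
      = ∫ t in Set.Ioi a, Real.exp (-t ^ 2 / 2) := by
    rw [← integral_comp_neg_Ioi]; congr 1; funext t; ring_nf
  have hint2 : Integrable (fun t : ℝ => t * Real.exp (-t ^ 2 / 2)) := by
    have := integrable_mul_exp_neg_mul_sq (by norm_num : (0:ℝ) < 1/2)
    convert this using 2 with t
    ring_nf
  have hmono : (∫ t in Set.Ioi a, a * Real.exp (-t ^ 2 / 2))
      ≤ ∫ t in Set.Ioi a, t * Real.exp (-t ^ 2 / 2) := by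
    refine setIntegral_mono_on ((gaussInt.integrableOn).const_mul a)
      hint2.integrableOn measurableSet_Ioi (fun t ht => ?_)
    exact mul_le_mul_of_nonneg_right (le_of_lt ht) (Real.exp_pos _).le
  have hval : (∫ t in Set.Ioi a, t * Real.exp (-t ^ 2 / 2)) = Real.exp (-a ^ 2 / 2) := by
    have hderiv : ∀ x ∈ Set.Ici a, HasDerivAt (fun t : ℝ => -Real.exp (-t ^ 2 / 2))
        (x * Real.exp (-x ^ 2 / 2)) x := by
      intro x _
      have h1 : HasDerivAt (fun t : ℝ => -t ^ 2 / 2) (-x) x := by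
        have := (hasDerivAt_pow 2 x).neg.div_const 2
        exact this.congr_deriv (by ring)
      have := h1.exp.neg
      exact this.congr_deriv (by ring)
    have htend : Tendsto (fun t : ℝ => -Real.exp (-t ^ 2 / 2)) atTop (nhds 0) := by
      rw [show (0:ℝ) = -0 by norm_num]
      refine Tendsto.neg ?_
      refine Real.tendsto_exp_atBot.comp ?_
      apply Filter.Tendsto.atBot_div_const (by norm_num : (0:ℝ) < 2)
      exact tendsto_neg_atTop_atBot.comp (tendsto_pow_atTop two_ne_zero)
    have := integral_Ioi_of_hasDerivAt_of_tendsto' hderiv hint2.integrableOn htend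
    rw [this]; simp
  have hstep : a * (∫ t in Set.Iic (-a), Real.exp (-t ^ 2 / 2)) ≤ Real.exp (-a ^ 2 / 2) := by
    rw [hrev, ← integral_const_mul]
    calc (∫ t in Set.Ioi a, a * Real.exp (-t ^ 2 / 2))
        ≤ ∫ t in Set.Ioi a, t * Real.exp (-t ^ 2 / 2) := hmono
      _ = Real.exp (-a ^ 2 / 2) := hval
  unfold stdNormalCDF
  have hs : 0 < Real.sqrt (2 * Real.pi) := by positivity
  rw [show a * (1 / Real.sqrt (2 * Real.pi) * ∫ t in Set.Iic (-a), Real.exp (-t ^ 2 / 2))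
      = 1 / Real.sqrt (2 * Real.pi) * (a * ∫ t in Set.Iic (-a), Real.exp (-t ^ 2 / 2)) by ring]
  exact mul_le_mul_of_nonneg_left hstep (by positivity)



lemma sqrt_eq_of_sq {A B : ℝ} (hA : 0 ≤ A) (hB : 0 ≤ B) (h : A ^ 2 = B ^ 2) : A = B := by
  nlinarith [sq_nonneg (A - B), sq_nonneg (A + B)]

lemma sqrt_half_identity (x : ℝ) (hx : 0 ≤ x) :
    2 * Real.sqrt Real.pi * Real.sqrt (x / 2)
      = Real.sqrt (2 * Real.pi) * Real.sqrt x := by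
  have h1 := Real.sq_sqrt Real.pi_nonneg
  have h2 := Real.sq_sqrt (show (0:ℝ) ≤ x / 2 by linarith)
  have h3 := Real.sq_sqrt (show (0:ℝ) ≤ 2 * Real.pi by positivity)
  have h4 := Real.sq_sqrt hx
  refine sqrt_eq_of_sq (by positivity) (by positivity) ?_
  linear_combination (4 * Real.sqrt (x / 2) ^ 2) * h1 + 4 * Real.pi * h2
    - Real.sqrt x ^ 2 * h3 - 2 * Real.pi * h4

lemma sqrt2_half_identity (x : ℝ) (hx : 0 ≤ x) :
    Real.sqrt 2 * Real.sqrt (x / 2) = Real.sqrt x := by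
  rw [← Real.sqrt_mul (by norm_num : (0:ℝ) ≤ 2)]
  congr 1; ring

lemma sqrt_bzp_identity (b ζ : ℝ) (hb : 0 ≤ b) (hζ : 0 ≤ ζ) :
    Real.sqrt (b * ζ * Real.pi / 2)
      = Real.sqrt b * Real.sqrt ζ * Real.sqrt (2 * Real.pi) / 2 := by
  have h1 := Real.sq_sqrt (show (0:ℝ) ≤ b * ζ * Real.pi / 2 by positivity)
  have h2 := Real.sq_sqrt hb
  have h3 := Real.sq_sqrt hζ
  have h4 := Real.sq_sqrt (show (0:ℝ) ≤ 2 * Real.pi by positivity)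
  refine sqrt_eq_of_sq (by positivity) (by positivity) ?_
  linear_combination h1 - (Real.sqrt ζ ^ 2 * Real.sqrt (2 * Real.pi) ^ 2 / 4) * h2
    - (b * Real.sqrt (2 * Real.pi) ^ 2 / 4) * h3 - (b * ζ / 4) * h4

lemma hasDerivAt_cdf_affine (q m : ℝ) :
    HasDerivAt (fun ε : ℝ => stdNormalCDF (q - ε / m))
      (-(1 / m) * (1 / Real.sqrt (2 * Real.pi) * Real.exp (-q ^ 2 / 2))) 0 := by
  have hg : HasDerivAt (fun ε : ℝ => q - ε / m) (-(1 / m)) 0 := by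
    simpa using ((hasDerivAt_id (0:ℝ)).div_const m).const_sub q
  have h := (hasDerivAt_cdf (q - 0 / m)).comp 0 hg
  simp only [zero_div, sub_zero] at h
  refine h.congr_deriv ?_
  ring


open Real Set Filter MeasureTheory in
lemma limit_aux (FA FB : ℝ → ℝ) (α β : ℝ) (hA : HasDerivAt FA (-α) 0)
    (hB : HasDerivAt FB (-β) 0) (hA0 : FA 0 = 1) (hB0 : FB 0 = 1) (hαβ : 0 < α + β) :
    Tendsto (fun ε => (FB ε * (1 - FA ε)) / (1 - FB ε * FA ε)) (nhdsWithin 0 (Set.Ioi 0))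
      (nhds (α / (α + β))) := by
  have hG : HasDerivAt (fun ε => FB ε * (1 - FA ε)) α 0 := by
    have h := hB.mul (hA.const_sub 1)
    refine h.congr_deriv ?_
    rw [hA0, hB0]; ring
  have hH : HasDerivAt (fun ε => 1 - FB ε * FA ε) (α + β) 0 := by
    have h := (hB.mul hA).const_sub 1
    refine h.congr_deriv ?_
    rw [hA0, hB0]; ring
  have hGs : Tendsto (fun ε => (FB ε * (1 - FA ε)) / ε) (nhdsWithin 0 {0}ᶜ) (nhds α) := by
    have h := hasDerivAt_iff_tendsto_slope.mp hG
    rw [slope_fun_def_field] at h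
    simpa [hA0, hB0] using h
  have hHs : Tendsto (fun ε => (1 - FB ε * FA ε) / ε) (nhdsWithin 0 {0}ᶜ) (nhds (α + β)) := by
    have h := hasDerivAt_iff_tendsto_slope.mp hH
    rw [slope_fun_def_field] at h
    simpa [hA0, hB0] using h
  have hmono : nhdsWithin (0:ℝ) (Set.Ioi 0) ≤ nhdsWithin 0 {0}ᶜ :=
    nhdsWithin_mono 0 (fun x hx => ne_of_gt hx)
  have hdiv := (hGs.mono_left hmono).div (hHs.mono_left hmono) (ne_of_gt hαβ)
  refine Tendsto.congr' ?_ hdiv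
  filter_upwards [self_mem_nhdsWithin] with ε hε
  exact div_div_div_cancel_right₀ (ne_of_gt hε) _ _

set_option maxHeartbeats 1000000 in
open Real Set Filter MeasureTheory in
theorem parisian_brownian_inner_limit (p σ ζ b : ℝ) (hp : 0 < p) (hσ : 0 < σ)
    (hζ : 0 < ζ) (hb : 0 < b) :
    Tendsto (fun ε : ℝ =>
        let A := stdNormalCDF ((p / σ) * Real.sqrt ζ - ε / (σ * Real.sqrt ζ))
          + Real.exp (2 * p * ε / σ ^ 2) *
            stdNormalCDF (-(p / σ) * Real.sqrt ζ - ε / (σ * Real.sqrt ζ))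
        let B := Real.exp (-(2 * p * ε) / σ ^ 2) *
            stdNormalCDF ((p / σ) * Real.sqrt b - ε / (σ * Real.sqrt b))
          + stdNormalCDF (-(p / σ) * Real.sqrt b - ε / (σ * Real.sqrt b))
        (B * (1 - A)) / (1 - B * A))
      (nhdsWithin 0 (Set.Ioi 0))
      (nhds ((Real.sqrt b * Psi ((p / σ) * Real.sqrt (ζ / 2))
            - (p / σ) * Real.sqrt (b * ζ * Real.pi / 2))
          / (Real.sqrt b * Psi ((p / σ) * Real.sqrt (ζ / 2))
            + Real.sqrt ζ * Psi ((p / σ) * Real.sqrt (b / 2))))) := by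
  have hσ0 : σ ≠ 0 := ne_of_gt hσ
  have hsζ : (0:ℝ) < Real.sqrt ζ := Real.sqrt_pos.mpr hζ
  have hsb : (0:ℝ) < Real.sqrt b := Real.sqrt_pos.mpr hb
  have hS0 : (0:ℝ) < Real.sqrt (2 * Real.pi) := Real.sqrt_pos.mpr (by positivity)
  set S : ℝ := Real.sqrt (2 * Real.pi) with hS_def
  set a : ℝ := p / σ * Real.sqrt ζ with ha_def
  set u : ℝ := p / σ * Real.sqrt b with hu_def
  have hapos : 0 < a := by rw [ha_def]; positivity
  have hupos : 0 < u := by rw [hu_def]; positivity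
  set Na : ℝ := stdNormalCDF a with hNa_def
  set Nu : ℝ := stdNormalCDF u with hNu_def
  set E1 : ℝ := Real.exp (-a ^ 2 / 2) with hE1_def
  set E2 : ℝ := Real.exp (-u ^ 2 / 2) with hE2_def
  set c1 : ℝ := 1 / (σ * Real.sqrt ζ) with hc1_def
  set c2 : ℝ := 1 / (σ * Real.sqrt b) with hc2_def
  have hc1pos : 0 < c1 := by rw [hc1_def]; positivity
  have hc2pos : 0 < c2 := by rw [hc2_def]; positivity
  set α : ℝ := 2 * c1 * (1 / S * E1) - 2 * p / σ ^ 2 * (1 - Na) with hα_def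
  set β : ℝ := 2 * p / σ ^ 2 * Nu + 2 * c2 * (1 / S * E2) with hβ_def
  clear_value S a u Na Nu E1 E2 c1 c2 α β
  have hnegζ : -(p / σ) * Real.sqrt ζ = -a := by rw [ha_def]; ring
  have hnegb : -(p / σ) * Real.sqrt b = -u := by rw [hu_def]; ring
  have hcdfnegA : stdNormalCDF (-a) = 1 - Na := by
    have := cdf_add_neg a; rw [hNa_def]; linarith
  have hcdfnegU : stdNormalCDF (-u) = 1 - Nu := by
    have := cdf_add_neg u; rw [hNu_def]; linarith
  -- derivative of A
  have hexp1 : HasDerivAt (fun ε : ℝ => Real.exp (2 * p * ε / σ ^ 2)) (2 * p / σ ^ 2) 0 := by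
    have hl : HasDerivAt (fun ε : ℝ => 2 * p * ε / σ ^ 2) (2 * p / σ ^ 2) 0 := by
      simpa using ((hasDerivAt_id (0:ℝ)).const_mul (2 * p)).div_const (σ ^ 2)
    simpa using hl.exp
  have hexp2 : HasDerivAt (fun ε : ℝ => Real.exp (-(2 * p * ε) / σ ^ 2))
      (-(2 * p / σ ^ 2)) 0 := by
    have hl : HasDerivAt (fun ε : ℝ => -(2 * p * ε) / σ ^ 2) (-(2 * p / σ ^ 2)) 0 := by
      have h := (((hasDerivAt_id (0:ℝ)).const_mul (2 * p)).neg.div_const (σ ^ 2))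
      refine h.congr_deriv ?_
      ring
    simpa using hl.exp
  have hA : HasDerivAt (fun ε : ℝ => stdNormalCDF (a - ε / (σ * Real.sqrt ζ))
      + Real.exp (2 * p * ε / σ ^ 2) *
        stdNormalCDF (-(p / σ) * Real.sqrt ζ - ε / (σ * Real.sqrt ζ))) (-α) 0 := by
    have h1 := hasDerivAt_cdf_affine a (σ * Real.sqrt ζ)
    have h2 := hasDerivAt_cdf_affine (-(p / σ) * Real.sqrt ζ) (σ * Real.sqrt ζ)
    have h := h1.add (hexp1.mul h2)
    refine h.congr_deriv ?_
    simp only [mul_zero, zero_div, sub_zero, Real.exp_zero, one_mul, hnegζ, neg_sq,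
      hcdfnegA, ← hE1_def, ← hS_def, ← hc1_def]
    rw [hα_def, hc1_def]
    field_simp
    ring
  have hB : HasDerivAt (fun ε : ℝ => Real.exp (-(2 * p * ε) / σ ^ 2) *
        stdNormalCDF (u - ε / (σ * Real.sqrt b))
      + stdNormalCDF (-(p / σ) * Real.sqrt b - ε / (σ * Real.sqrt b))) (-β) 0 := by
    have h1 := hasDerivAt_cdf_affine u (σ * Real.sqrt b)
    have h2 := hasDerivAt_cdf_affine (-(p / σ) * Real.sqrt b) (σ * Real.sqrt b)
    have h := (hexp2.mul h1).add h2
    refine h.congr_deriv ?_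
    simp only [mul_zero, neg_zero, zero_div, sub_zero, Real.exp_zero, one_mul, hnegb, neg_sq,
      ← hNu_def, ← hE2_def, ← hS_def, ← hc2_def]
    rw [hβ_def, hc2_def]
    field_simp
    ring
  have hA0 : stdNormalCDF (a - 0 / (σ * Real.sqrt ζ))
      + Real.exp (2 * p * 0 / σ ^ 2) *
        stdNormalCDF (-(p / σ) * Real.sqrt ζ - 0 / (σ * Real.sqrt ζ)) = 1 := by
    simp only [zero_div, sub_zero, mul_zero, Real.exp_zero, one_mul, hnegζ, hcdfnegA,
      ← hNa_def]
    ring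
  have hB0 : Real.exp (-(2 * p * 0) / σ ^ 2) *
        stdNormalCDF (u - 0 / (σ * Real.sqrt b))
      + stdNormalCDF (-(p / σ) * Real.sqrt b - 0 / (σ * Real.sqrt b)) = 1 := by
    simp only [mul_zero, neg_zero, zero_div, sub_zero, Real.exp_zero, one_mul, hnegb, hcdfnegU,
      ← hNu_def]
    ring
  -- positivity of α + β
  have hmills : a * (1 - Na) ≤ 1 / S * E1 := by
    have h := mills a hapos
    rw [hcdfnegA] at h
    rw [hE1_def, hS_def]
    exact h
  have hac1 : a * c1 = p / σ ^ 2 := by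
    rw [ha_def, hc1_def]
    field_simp
  have hαnn : 0 ≤ α := by
    have h1 : 0 ≤ c1 * (1 / S * E1 - a * (1 - Na)) :=
      mul_nonneg hc1pos.le (by linarith)
    have hNa1 : Na ≤ 1 := by
      have := cdf_nonneg (-a); rw [hcdfnegA] at this; linarith
    have h2 : 2 * p / σ ^ 2 * (1 - Na) = 2 * (a * c1) * (1 - Na) := by
      rw [hac1]; ring
    rw [hα_def]
    nlinarith [h1, h2]
  have hβpos : 0 < β := by
    have h1 : 0 ≤ 2 * p / σ ^ 2 * Nu :=
      mul_nonneg (by positivity) (hNu_def ▸ cdf_nonneg u)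
    have h2 : 0 < 2 * c2 * (1 / S * E2) := by
      apply mul_pos (by linarith)
      apply mul_pos (by positivity)
      rw [hE2_def]; exact Real.exp_pos _
    rw [hβ_def]; linarith
  have hαβ : 0 < α + β := by linarith
  -- value of the limit
  have hPζ : Psi (p / σ * Real.sqrt (ζ / 2))
      = p / σ * (S * Real.sqrt ζ) * Na - p / σ * (S * Real.sqrt ζ) / 2 + E1 := by
    have e1 : Real.sqrt 2 * (p / σ * Real.sqrt (ζ / 2)) = a := by
      rw [show Real.sqrt 2 * (p / σ * Real.sqrt (ζ / 2))
          = p / σ * (Real.sqrt 2 * Real.sqrt (ζ / 2)) by ring,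
        sqrt2_half_identity ζ hζ.le, ha_def]
    have e2 : (p / σ * Real.sqrt (ζ / 2)) ^ 2 = a ^ 2 / 2 := by
      rw [mul_pow, Real.sq_sqrt (by positivity : (0:ℝ) ≤ ζ / 2), ha_def, mul_pow,
        Real.sq_sqrt hζ.le]
      ring
    have e3 : 2 * Real.sqrt Real.pi * (p / σ * Real.sqrt (ζ / 2))
        = p / σ * (S * Real.sqrt ζ) := by
      rw [show 2 * Real.sqrt Real.pi * (p / σ * Real.sqrt (ζ / 2))
          = p / σ * (2 * Real.sqrt Real.pi * Real.sqrt (ζ / 2)) by ring,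
        sqrt_half_identity ζ hζ.le, hS_def]
    have e4 : Real.sqrt Real.pi * (p / σ * Real.sqrt (ζ / 2))
        = p / σ * (S * Real.sqrt ζ) / 2 := by linarith
    unfold Psi
    rw [e1, e2, e3, e4, ← hNa_def, show -(a ^ 2 / 2) = -a ^ 2 / 2 by ring, ← hE1_def]
  have hPb : Psi (p / σ * Real.sqrt (b / 2))
      = p / σ * (S * Real.sqrt b) * Nu - p / σ * (S * Real.sqrt b) / 2 + E2 := by
    have e1 : Real.sqrt 2 * (p / σ * Real.sqrt (b / 2)) = u := by
      rw [show Real.sqrt 2 * (p / σ * Real.sqrt (b / 2))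
          = p / σ * (Real.sqrt 2 * Real.sqrt (b / 2)) by ring,
        sqrt2_half_identity b hb.le, hu_def]
    have e2 : (p / σ * Real.sqrt (b / 2)) ^ 2 = u ^ 2 / 2 := by
      rw [mul_pow, Real.sq_sqrt (by positivity : (0:ℝ) ≤ b / 2), hu_def, mul_pow,
        Real.sq_sqrt hb.le]
      ring
    have e3 : 2 * Real.sqrt Real.pi * (p / σ * Real.sqrt (b / 2))
        = p / σ * (S * Real.sqrt b) := by
      rw [show 2 * Real.sqrt Real.pi * (p / σ * Real.sqrt (b / 2))
          = p / σ * (2 * Real.sqrt Real.pi * Real.sqrt (b / 2)) by ring,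
        sqrt_half_identity b hb.le, hS_def]
    have e4 : Real.sqrt Real.pi * (p / σ * Real.sqrt (b / 2))
        = p / σ * (S * Real.sqrt b) / 2 := by linarith
    unfold Psi
    rw [e1, e2, e3, e4, ← hNu_def, show -(u ^ 2 / 2) = -u ^ 2 / 2 by ring, ← hE2_def]
  have hbzp : Real.sqrt (b * ζ * Real.pi / 2) = Real.sqrt b * Real.sqrt ζ * S / 2 := by
    rw [sqrt_bzp_identity b ζ hb.le hζ.le, hS_def]
  set K : ℝ := σ * Real.sqrt ζ * Real.sqrt b * S / 2 with hK_def
  have hKpos : 0 < K := by rw [hK_def]; positivity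
  have hnum : Real.sqrt b * Psi (p / σ * Real.sqrt (ζ / 2))
      - p / σ * Real.sqrt (b * ζ * Real.pi / 2) = K * α := by
    rw [hPζ, hbzp, hK_def, hα_def, hc1_def]
    field_simp
    ring
  have hden : Real.sqrt b * Psi (p / σ * Real.sqrt (ζ / 2))
      + Real.sqrt ζ * Psi (p / σ * Real.sqrt (b / 2)) = K * (α + β) := by
    rw [hPζ, hPb, hK_def, hα_def, hβ_def, hc1_def, hc2_def]
    field_simp
    ring
  have hval : (Real.sqrt b * Psi (p / σ * Real.sqrt (ζ / 2))
        - p / σ * Real.sqrt (b * ζ * Real.pi / 2))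
      / (Real.sqrt b * Psi (p / σ * Real.sqrt (ζ / 2))
        + Real.sqrt ζ * Psi (p / σ * Real.sqrt (b / 2))) = α / (α + β) := by
    rw [hnum, hden, mul_div_mul_left _ _ (ne_of_gt hKpos)]
  rw [hval]
  exact limit_aux _ _ α β hA hB hA0 hB0 hαβ
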